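/- Let γₙ be the product on ℝⁿ of n copies of the standard normal distribution N(0,1), let L be a real d_x×n matrix and M a real d_y×n matrix, and let A be a symmetric d_x×d_x real matrix and B a symmetric d_y×d_y real matrix. For z ∈ ℝⁿ set x = Lz and y = Mz, and let Σ_{xy} = L Mᵀ (the cross-covariance of x and y). Then the covariance of the quadratic forms xᵀAx and yᵀBy under γₙ, i.e. ∫ (xᵀAx)(yᵀBy) dγₙ(z) − (∫ xᵀAx dγₙ(z))·(∫ yᵀBy dγₙ(z)), equals Σ_{i,j=1}^{d_x} Σ_{k,l=1}^{d_y} A_{ij} B_{kl} [ (Σ_{xy})_{ik}(Σ_{xy})_{jl} + (Σ_{xy})_{il}(Σ_{xy})_{jk} ]. -/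

import Mathlib

open Matrix MeasureTheory ProbabilityTheory Real
open scoped ENNReal NNReal



lemma integrable_pow_mul_exp {b : ℝ} (hb : 0 < b) (k : ℕ) :
    Integrable fun x : ℝ => x ^ k * Real.exp (-b * x ^ 2) := by
  have : (-1 : ℝ) < k := lt_of_lt_of_le (by norm_num) (Nat.cast_nonneg k)
  simpa [Real.rpow_natCast] using integrable_rpow_mul_exp_neg_mul_sq hb this

noncomputable def gI (k : ℕ) : ℝ := ∫ x : ℝ, x ^ k * Real.exp (-(2:ℝ)⁻¹ * x ^ 2)

lemma gI_zero : gI 0 = Real.sqrt (2 * π) := by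
  have := integral_gaussian (2:ℝ)⁻¹
  rw [gI]
  simp only [pow_zero, one_mul]
  rw [this, show π / (2:ℝ)⁻¹ = 2 * π by field_simp]

lemma gI_one : gI 1 = 0 := by
  have hd : ∀ x : ℝ, HasDerivAt (fun x : ℝ => -Real.exp (-(2:ℝ)⁻¹ * x ^ 2))
      (x ^ 1 * Real.exp (-(2:ℝ)⁻¹ * x ^ 2)) x := by
    intro x
    have h2 : HasDerivAt (fun x : ℝ => Real.exp (-(2:ℝ)⁻¹ * x ^ 2))
        (Real.exp (-(2:ℝ)⁻¹ * x ^ 2) * (-(2:ℝ)⁻¹ * (2 * x))) x := by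
      simpa using (((hasDerivAt_pow 2 x).const_mul (-(2:ℝ)⁻¹)).exp)
    exact h2.neg.congr_deriv (by ring)
  exact integral_eq_zero_of_hasDerivAt_of_integrable hd
    (integrable_pow_mul_exp (by norm_num) 1)
    ((integrable_pow_mul_exp (b := (2:ℝ)⁻¹) (by norm_num) 0).neg.congr (by
      filter_upwards with x; simp))

lemma gI_rec (k : ℕ) : gI (k + 2) = (k + 1) * gI k := by
  have hd : ∀ x : ℝ, HasDerivAt (fun x : ℝ => x ^ (k+1) * Real.exp (-(2:ℝ)⁻¹ * x ^ 2))
      ((k+1 : ℝ) * (x ^ k * Real.exp (-(2:ℝ)⁻¹ * x ^ 2))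
        - x ^ (k+2) * Real.exp (-(2:ℝ)⁻¹ * x ^ 2)) x := by
    intro x
    have h1 : HasDerivAt (fun x : ℝ => x ^ (k+1)) ((k+1 : ℝ) * x ^ k) x := by
      simpa using hasDerivAt_pow (k+1) x
    have h2 : HasDerivAt (fun x : ℝ => Real.exp (-(2:ℝ)⁻¹ * x ^ 2))
        (Real.exp (-(2:ℝ)⁻¹ * x ^ 2) * (-(2:ℝ)⁻¹ * (2 * x))) x := by
      simpa using (((hasDerivAt_pow 2 x).const_mul (-(2:ℝ)⁻¹)).exp)
    exact (h1.mul h2).congr_deriv (by ring)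
  have h0 := integral_eq_zero_of_hasDerivAt_of_integrable hd
    (((integrable_pow_mul_exp (b := (2:ℝ)⁻¹) (by norm_num) k).const_mul _).sub
      (integrable_pow_mul_exp (by norm_num) (k+2)))
    (integrable_pow_mul_exp (by norm_num) (k+1))
  rw [integral_sub (((integrable_pow_mul_exp (b := (2:ℝ)⁻¹) (by norm_num) k).const_mul _))
      (integrable_pow_mul_exp (by norm_num) (k+2)), integral_const_mul] at h0
  rw [gI, gI]
  linarith

lemma gauss_eval (g : ℝ → ℝ) :
    ∫ x, g x ∂(gaussianReal 0 1)
      = ∫ x, ((Real.sqrt (2 * π))⁻¹ * Real.exp (-(2:ℝ)⁻¹ * x ^ 2)) * g x := by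
  rw [gaussianReal_of_var_ne_zero 0 one_ne_zero]
  have h : gaussianPDF 0 1 = fun x => ((gaussianPDFReal 0 1 x).toNNReal : ℝ≥0∞) := by
    funext x; simp [gaussianPDF, ENNReal.ofReal]
  rw [h, integral_withDensity_eq_integral_smul
    ((measurable_gaussianPDFReal 0 1).real_toNNReal) g]
  congr 1
  funext x
  rw [NNReal.smul_def, Real.coe_toNNReal _ (gaussianPDFReal_nonneg 0 1 x)]
  simp only [gaussianPDFReal, NNReal.coe_one, mul_one, sub_zero, smul_eq_mul]
  ring_nf

lemma gmom_eq (k : ℕ) : ∫ x, x ^ k ∂(gaussianReal 0 1) = (Real.sqrt (2 * π))⁻¹ * gI k := by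
  rw [gauss_eval (fun x => x ^ k)]
  rw [gI, ← integral_const_mul]
  congr 1; funext x; ring

lemma sqrt2pi_pos : (0:ℝ) < Real.sqrt (2 * π) := Real.sqrt_pos.2 (by positivity)

lemma gmom0 : ∫ x, x ^ 0 ∂(gaussianReal 0 1) = 1 := by
  rw [gmom_eq, gI_zero, inv_mul_cancel₀ sqrt2pi_pos.ne']

lemma gmom1 : ∫ x, x ^ 1 ∂(gaussianReal 0 1) = 0 := by rw [gmom_eq, gI_one, mul_zero]

lemma gmom2 : ∫ x, x ^ 2 ∂(gaussianReal 0 1) = 1 := by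
  rw [gmom_eq, show 2 = 0 + 2 from rfl, gI_rec, gI_zero]
  rw [Nat.cast_zero]
  rw [zero_add, one_mul, inv_mul_cancel₀ sqrt2pi_pos.ne']

lemma gmom3 : ∫ x, x ^ 3 ∂(gaussianReal 0 1) = 0 := by
  rw [gmom_eq, show 3 = 1 + 2 from rfl, gI_rec, gI_one, mul_zero, mul_zero]

lemma gmom4 : ∫ x, x ^ 4 ∂(gaussianReal 0 1) = 3 := by
  rw [gmom_eq, show 4 = 2 + 2 from rfl, gI_rec, show gI 2 = gI (0 + 2) from rfl, gI_rec, gI_zero]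
  push_cast
  field_simp
  ring

lemma gmom1' : ∫ x : ℝ, x ∂(gaussianReal 0 1) = 0 := by simpa using gmom1


lemma pi_integral {n : ℕ} (f : Fin n → ℝ → ℝ) :
    ∫ z : Fin n → ℝ, ∏ i, f i (z i) ∂(Measure.pi fun _ => gaussianReal 0 1)
      = ∏ i, ∫ x, f i x ∂(gaussianReal 0 1) := by
  letI : MeasureSpace ℝ := ⟨gaussianReal 0 1⟩
  haveI : SigmaFinite (volume : Measure ℝ) := by
    show SigmaFinite (gaussianReal 0 1); infer_instance
  exact MeasureTheory.integral_fintype_prod_eq_prod f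

lemma pi_integrable {n : ℕ} (f : Fin n → ℝ → ℝ)
    (hf : ∀ i, Integrable (f i) (gaussianReal 0 1)) :
    Integrable (fun z : Fin n → ℝ => ∏ i, f i (z i))
      (Measure.pi fun _ => gaussianReal 0 1) := by
  letI : MeasureSpace ℝ := ⟨gaussianReal 0 1⟩
  haveI : SigmaFinite (volume : Measure ℝ) := by
    show SigmaFinite (gaussianReal 0 1); infer_instance
  exact MeasureTheory.Integrable.fintype_prod hf



def cnt4 {n : ℕ} (a b c d i : Fin n) : ℕ :=
  (if a = i then 1 else 0) + (if b = i then 1 else 0)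
    + (if c = i then 1 else 0) + (if d = i then 1 else 0)

lemma prod_single_pow {n : ℕ} (z : Fin n → ℝ) (e : Fin n) :
    ∏ i, z i ^ (if e = i then 1 else 0) = z e := by
  rw [Finset.prod_congr rfl (fun i _ => show z i ^ (if e = i then 1 else 0)
        = if e = i then z i else 1 by split <;> simp)]
  rw [Finset.prod_ite_eq]
  simp

lemma monom4 {n : ℕ} (a b c d : Fin n) (z : Fin n → ℝ) :
    z a * z b * z c * z d = ∏ i, z i ^ cnt4 a b c d i := by
  simp only [cnt4, pow_add, Finset.prod_mul_distrib, prod_single_pow]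

lemma monom2 {n : ℕ} (a b : Fin n) (z : Fin n → ℝ) :
    z a * z b = ∏ i, z i ^ ((if a = i then 1 else 0) + (if b = i then 1 else 0)) := by
  simp only [pow_add, Finset.prod_mul_distrib, prod_single_pow]

lemma E2 {n : ℕ} (a b : Fin n) :
    ∫ z : Fin n → ℝ, z a * z b ∂(Measure.pi fun _ => gaussianReal 0 1)
      = if a = b then 1 else 0 := by
  rw [show (fun z : Fin n → ℝ => z a * z b)
      = fun z => ∏ i, (fun (i : Fin n) (x : ℝ) =>
          x ^ ((if a = i then 1 else 0) + (if b = i then 1 else 0))) i (z i)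
    from funext fun z => monom2 a b z]
  rw [pi_integral (fun (i : Fin n) (x : ℝ) =>
          x ^ ((if a = i then 1 else 0) + (if b = i then 1 else 0)))]
  by_cases hab : a = b
  · subst hab
    rw [Finset.prod_congr rfl (fun i _ => show
        (∫ x : ℝ, x ^ ((if a = i then 1 else 0) + (if a = i then 1 else 0)) ∂(gaussianReal 0 1))
          = if a = i then 1 else 1 by
      by_cases h : a = i <;> simp [h, gmom2, gmom0])]
    simp
  · rw [Finset.prod_eq_zero (Finset.mem_univ a)
      (by simp [Ne.symm hab, gmom1, gmom1'])]
    simp [hab]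

lemma E4 {n : ℕ} (a b c d : Fin n) :
    ∫ z : Fin n → ℝ, z a * z b * z c * z d ∂(Measure.pi fun _ => gaussianReal 0 1)
      = (if a = b then (1:ℝ) else 0) * (if c = d then 1 else 0)
        + (if a = c then 1 else 0) * (if b = d then 1 else 0)
        + (if a = d then 1 else 0) * (if b = c then 1 else 0) := by
  rw [show (fun z : Fin n → ℝ => z a * z b * z c * z d)
      = fun z => ∏ i, (fun (i : Fin n) (x : ℝ) => x ^ cnt4 a b c d i) i (z i)
    from funext fun z => monom4 a b c d z]
  rw [pi_integral (fun (i : Fin n) (x : ℝ) => x ^ cnt4 a b c d i)]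
  rcases eq_or_ne a b with hab | hab
  · subst hab
    rcases eq_or_ne c d with hcd | hcd
    · subst hcd
      rcases eq_or_ne a c with hac | hac
      · subst hac
        rw [Finset.prod_congr rfl (fun i _ => show
            (∫ x : ℝ, x ^ cnt4 a a a a i ∂(gaussianReal 0 1)) = if a = i then 3 else 1 by
          by_cases h : a = i <;> simp [cnt4, h, gmom4, gmom0])]
        rw [Finset.prod_ite_eq]
        simp
        norm_num
      · rw [Finset.prod_congr rfl (fun i _ => show
            (∫ x : ℝ, x ^ cnt4 a a c c i ∂(gaussianReal 0 1)) = 1 by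
          by_cases h1 : a = i <;> by_cases h2 : c = i
          · exact absurd (h1.trans h2.symm) hac
          all_goals simp [cnt4, h1, h2, gmom2, gmom0])]
        have had : a ≠ c := hac
        simp [hac]
    · rcases eq_or_ne a c with hac | hac
      · subst hac
        have had : a ≠ d := hcd
        rw [Finset.prod_eq_zero (Finset.mem_univ d)
          (by simp [cnt4, had, gmom1, gmom1'])]
        simp [hcd, had]
      · have h1 : c ≠ d := hcd
        have h2 : d ≠ c := Ne.symm hcd
        rw [Finset.prod_eq_zero (Finset.mem_univ c)
          (by simp [cnt4, hac, h2, gmom1, gmom1'])]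
        simp [hcd, hac]
  · rcases eq_or_ne a c with hac | hac
    · subst hac
      rcases eq_or_ne b d with hbd | hbd
      · subst hbd
        rw [Finset.prod_congr rfl (fun i _ => show
            (∫ x : ℝ, x ^ cnt4 a b a b i ∂(gaussianReal 0 1)) = 1 by
          by_cases h1 : a = i <;> by_cases h2 : b = i
          · exact absurd (h1.trans h2.symm) hab
          all_goals simp [cnt4, h1, h2, gmom2, gmom0])]
        simp [hab, Ne.symm hab]
      · have h1 : d ≠ b := Ne.symm hbd
        rw [Finset.prod_eq_zero (Finset.mem_univ b)
          (by simp [cnt4, hab, h1, gmom1, gmom1'])]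
        simp [hab, hbd, Ne.symm hab]
    · rcases eq_or_ne a d with had | had
      · subst had
        rcases eq_or_ne b c with hbc | hbc
        · subst hbc
          rw [Finset.prod_congr rfl (fun i _ => show
              (∫ x : ℝ, x ^ cnt4 a b b a i ∂(gaussianReal 0 1)) = 1 by
            by_cases h1 : a = i <;> by_cases h2 : b = i
            · exact absurd (h1.trans h2.symm) hab
            all_goals simp [cnt4, h1, h2, gmom2, gmom0])]
          simp [hab, hac, fun h => hab (h : b = a).symm]
        · have h1 : c ≠ b := Ne.symm hbc
          rw [Finset.prod_eq_zero (Finset.mem_univ b)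
            (by simp [cnt4, hab, h1, gmom1, gmom1'])]
          simp [hab, hac, hbc]
      · rw [Finset.prod_eq_zero (Finset.mem_univ a)
          (by simp [cnt4, Ne.symm hab, Ne.symm hac, Ne.symm had, gmom1, gmom1'])]
        simp [hab, hac, had]


lemma int_pow_gauss (k : ℕ) : Integrable (fun x : ℝ => x ^ k) (gaussianReal 0 1) := by
  rw [gaussianReal_of_var_ne_zero 0 one_ne_zero]
  rw [integrable_withDensity_iff_integrable_smul' (measurable_gaussianPDF 0 1)
    (ae_of_all _ fun x => ENNReal.ofReal_lt_top)]
  have h : (fun x : ℝ => (gaussianPDF 0 1 x).toReal • x ^ k)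
      = fun x : ℝ => (Real.sqrt (2 * π))⁻¹ • (x ^ k * Real.exp (-(2:ℝ)⁻¹ * x ^ 2)) := by
    funext x
    rw [show gaussianPDF 0 1 x = ENNReal.ofReal (gaussianPDFReal 0 1 x) from rfl,
      ENNReal.toReal_ofReal (gaussianPDFReal_nonneg 0 1 x)]
    simp only [gaussianPDFReal, smul_eq_mul, NNReal.coe_one, mul_one, sub_zero]
    ring_nf
  rw [h]
  exact (integrable_pow_mul_exp (b := (2:ℝ)⁻¹) (by norm_num) k).smul ((Real.sqrt (2 * π))⁻¹ : ℝ)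

lemma int4 {n : ℕ} (a b c d : Fin n) :
    Integrable (fun z : Fin n → ℝ => z a * z b * z c * z d)
      (Measure.pi fun _ => gaussianReal 0 1) :=
  (pi_integrable (fun (i : Fin n) (x : ℝ) => x ^ cnt4 a b c d i)
    (fun _ => int_pow_gauss _)).congr (ae_of_all _ fun z => (monom4 a b c d z).symm)

lemma int2 {n : ℕ} (a b : Fin n) :
    Integrable (fun z : Fin n → ℝ => z a * z b)
      (Measure.pi fun _ => gaussianReal 0 1) :=
  (pi_integrable (fun (i : Fin n) (x : ℝ) =>
      x ^ ((if a = i then 1 else 0) + (if b = i then 1 else 0)))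
    (fun _ => int_pow_gauss _)).congr (ae_of_all _ fun z => (monom2 a b z).symm)



lemma sum_swap3 {α β : Type*} [Fintype α] [Fintype β] (g : α → β → β → ℝ) :
    ∑ x, ∑ i, ∑ j, g x i j = ∑ i, ∑ j, ∑ x, g x i j := by
  rw [Finset.sum_comm]
  exact Finset.sum_congr rfl fun i _ => Finset.sum_comm

lemma sum_swap4 {α β : Type*} [Fintype α] [Fintype β] (f : α → α → β → β → ℝ) :
    ∑ a, ∑ b, ∑ i, ∑ j, f a b i j = ∑ i, ∑ j, ∑ a, ∑ b, f a b i j :=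
  calc ∑ a, ∑ b, ∑ i, ∑ j, f a b i j
      = ∑ a, ∑ i, ∑ j, ∑ b, f a b i j :=
        Finset.sum_congr rfl fun a _ => sum_swap3 _
    _ = ∑ i, ∑ j, ∑ a, ∑ b, f a b i j := sum_swap3 _

lemma quad_expand {d n : ℕ} (L : Matrix (Fin d) (Fin n) ℝ) (A : Matrix (Fin d) (Fin d) ℝ)
    (z : Fin n → ℝ) :
    L.mulVec z ⬝ᵥ A.mulVec (L.mulVec z)
      = ∑ a, ∑ b, (∑ i, ∑ j, A i j * L i a * L j b) * (z a * z b) := by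
  simp only [dotProduct, mulVec, Finset.sum_mul, Finset.mul_sum]
  rw [sum_swap4, Finset.sum_comm]
  refine Finset.sum_congr rfl fun a _ => Finset.sum_congr rfl fun b _ =>
    Finset.sum_congr rfl fun i _ => Finset.sum_congr rfl fun j _ => by ring


lemma swapP2 {α β₁ β₂ : Type*} [Fintype α] [Fintype β₁] [Fintype β₂]
    (g : α → β₁ → β₂ → ℝ) :
    ∑ x, ∑ i, ∑ j, g x i j = ∑ i, ∑ j, ∑ x, g x i j := by
  rw [Finset.sum_comm]
  exact Finset.sum_congr rfl fun i _ => Finset.sum_comm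

lemma swapP3 {α β₁ β₂ β₃ : Type*} [Fintype α] [Fintype β₁] [Fintype β₂] [Fintype β₃]
    (g : α → β₁ → β₂ → β₃ → ℝ) :
    ∑ x, ∑ i, ∑ j, ∑ k, g x i j k = ∑ i, ∑ j, ∑ k, ∑ x, g x i j k := by
  rw [Finset.sum_comm]
  exact Finset.sum_congr rfl fun i _ => swapP2 _

lemma swapP4 {α β₁ β₂ β₃ β₄ : Type*} [Fintype α] [Fintype β₁] [Fintype β₂] [Fintype β₃]
    [Fintype β₄] (g : α → β₁ → β₂ → β₃ → β₄ → ℝ) :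
    ∑ x, ∑ i, ∑ j, ∑ k, ∑ l, g x i j k l = ∑ i, ∑ j, ∑ k, ∑ l, ∑ x, g x i j k l := by
  rw [Finset.sum_comm]
  exact Finset.sum_congr rfl fun i _ => swapP3 _

lemma swap24 {α β γ : Type*} [Fintype α] [Fintype β] [Fintype γ]
    (f : α → α → β → β → γ → γ → ℝ) :
    ∑ a, ∑ b, ∑ i, ∑ j, ∑ k, ∑ l, f a b i j k l
      = ∑ i, ∑ j, ∑ k, ∑ l, ∑ a, ∑ b, f a b i j k l :=
  calc ∑ a, ∑ b, ∑ i, ∑ j, ∑ k, ∑ l, f a b i j k l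
      = ∑ a, ∑ i, ∑ j, ∑ k, ∑ l, ∑ b, f a b i j k l :=
        Finset.sum_congr rfl fun a _ => swapP4 _
    _ = ∑ i, ∑ j, ∑ k, ∑ l, ∑ a, ∑ b, f a b i j k l :=
        swapP4 (g := fun a i j k l => ∑ b, f a b i j k l)

lemma mul_expand {α β : Type*} [Fintype α] [Fintype β] (P : α → α → ℝ) (Q : β → β → ℝ) :
    (∑ a, ∑ b, P a b) * (∑ c, ∑ d, Q c d) = ∑ a, ∑ b, ∑ c, ∑ d, P a b * Q c d := by
  rw [Finset.sum_mul]
  refine Finset.sum_congr rfl fun a _ => ?_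
  rw [Finset.sum_mul]
  refine Finset.sum_congr rfl fun b _ => ?_
  rw [Finset.mul_sum]
  refine Finset.sum_congr rfl fun c _ => ?_
  rw [Finset.mul_sum]

lemma contractδ {n : ℕ} (h : Fin n → Fin n → ℝ) (a b : Fin n) :
    ∑ c, ∑ d, (if a = c then (1:ℝ) else 0) * ((if b = d then (1:ℝ) else 0) * h c d)
      = h a b := by
  simp [ite_mul, zero_mul, Finset.sum_ite_eq]

/-- Covariance of two Gaussian quadratic forms xᵀAx and yᵀBy, where
x = Lz, y = Mz and z is a standard Gaussian vector, expressed via the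
cross-covariance matrix Σ_{xy} = L Mᵀ. -/
theorem stmt_6 (n dx dy : ℕ)
    (L : Matrix (Fin dx) (Fin n) ℝ) (M : Matrix (Fin dy) (Fin n) ℝ)
    (A : Matrix (Fin dx) (Fin dx) ℝ) (B : Matrix (Fin dy) (Fin dy) ℝ)
    (hA : A.IsSymm) (hB : B.IsSymm) :
    (∫ z : Fin n → ℝ,
        (L.mulVec z ⬝ᵥ A.mulVec (L.mulVec z)) *
          (M.mulVec z ⬝ᵥ B.mulVec (M.mulVec z))
        ∂(Measure.pi fun _ => gaussianReal 0 1)) -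
      (∫ z : Fin n → ℝ, L.mulVec z ⬝ᵥ A.mulVec (L.mulVec z)
          ∂(Measure.pi fun _ => gaussianReal 0 1)) *
        (∫ z : Fin n → ℝ, M.mulVec z ⬝ᵥ B.mulVec (M.mulVec z)
          ∂(Measure.pi fun _ => gaussianReal 0 1)) =
      ∑ i : Fin dx, ∑ j : Fin dx, ∑ k : Fin dy, ∑ l : Fin dy,
        A i j * B k l *
          ((L * Mᵀ) i k * (L * Mᵀ) j l + (L * Mᵀ) i l * (L * Mᵀ) j k) := by
  have hQz := quad_expand L A
  have hRz := quad_expand M B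
  -- mean of Q
  have hQ : ∫ z : Fin n → ℝ, L.mulVec z ⬝ᵥ A.mulVec (L.mulVec z)
        ∂(Measure.pi fun _ => gaussianReal 0 1)
      = ∑ a, ∑ b, (∑ i, ∑ j, A i j * L i a * L j b) * (if a = b then (1:ℝ) else 0) := by
    simp only [hQz]
    rw [integral_finset_sum _ (fun a _ => integrable_finset_sum _
      (fun b _ => (int2 a b).const_mul _))]
    refine Finset.sum_congr rfl fun a _ => ?_
    rw [integral_finset_sum _ (fun b _ => (int2 a b).const_mul _)]
    refine Finset.sum_congr rfl fun b _ => ?_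
    rw [integral_const_mul, E2]
  have hR : ∫ z : Fin n → ℝ, M.mulVec z ⬝ᵥ B.mulVec (M.mulVec z)
        ∂(Measure.pi fun _ => gaussianReal 0 1)
      = ∑ c, ∑ d, (∑ k, ∑ l, B k l * M k c * M l d) * (if c = d then (1:ℝ) else 0) := by
    simp only [hRz]
    rw [integral_finset_sum _ (fun a _ => integrable_finset_sum _
      (fun b _ => (int2 a b).const_mul _))]
    refine Finset.sum_congr rfl fun a _ => ?_
    rw [integral_finset_sum _ (fun b _ => (int2 a b).const_mul _)]
    refine Finset.sum_congr rfl fun b _ => ?_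
    rw [integral_const_mul, E2]
  -- second moment
  have hpt : ∀ z : Fin n → ℝ,
      (L.mulVec z ⬝ᵥ A.mulVec (L.mulVec z)) * (M.mulVec z ⬝ᵥ B.mulVec (M.mulVec z))
        = ∑ a, ∑ b, ∑ c, ∑ d,
            ((∑ i, ∑ j, A i j * L i a * L j b) * (∑ k, ∑ l, B k l * M k c * M l d))
              * (z a * z b * z c * z d) := by
    intro z
    rw [hQz z, hRz z, mul_expand]
    refine Finset.sum_congr rfl fun a _ => Finset.sum_congr rfl fun b _ =>
      Finset.sum_congr rfl fun c _ => Finset.sum_congr rfl fun d _ => by ring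
  have hQR : ∫ z : Fin n → ℝ,
        (L.mulVec z ⬝ᵥ A.mulVec (L.mulVec z)) * (M.mulVec z ⬝ᵥ B.mulVec (M.mulVec z))
        ∂(Measure.pi fun _ => gaussianReal 0 1)
      = ∑ a, ∑ b, ∑ c, ∑ d,
          ((∑ i, ∑ j, A i j * L i a * L j b) * (∑ k, ∑ l, B k l * M k c * M l d))
            * ((if a = b then (1:ℝ) else 0) * (if c = d then 1 else 0)
              + (if a = c then 1 else 0) * (if b = d then 1 else 0)
              + (if a = d then 1 else 0) * (if b = c then 1 else 0)) := by
    simp only [hpt]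
    rw [integral_finset_sum _ (fun a _ => integrable_finset_sum _ fun b _ =>
      integrable_finset_sum _ fun c _ => integrable_finset_sum _ fun d _ =>
        (int4 a b c d).const_mul _)]
    refine Finset.sum_congr rfl fun a _ => ?_
    rw [integral_finset_sum _ (fun b _ => integrable_finset_sum _ fun c _ =>
      integrable_finset_sum _ fun d _ => (int4 a b c d).const_mul _)]
    refine Finset.sum_congr rfl fun b _ => ?_
    rw [integral_finset_sum _ (fun c _ => integrable_finset_sum _ fun d _ =>
      (int4 a b c d).const_mul _)]
    refine Finset.sum_congr rfl fun c _ => ?_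
    rw [integral_finset_sum _ (fun d _ => (int4 a b c d).const_mul _)]
    refine Finset.sum_congr rfl fun d _ => ?_
    rw [integral_const_mul, E4]
  rw [hQR, hQ, hR]
  -- split the big sum into three pieces
  simp only [mul_add, Finset.sum_add_distrib]
  -- first piece equals the product of means
  have hS1 : (∑ a, ∑ b, ∑ c, ∑ d,
        ((∑ i, ∑ j, A i j * L i a * L j b) * (∑ k, ∑ l, B k l * M k c * M l d))
          * ((if a = b then (1:ℝ) else 0) * (if c = d then 1 else 0)))
      = (∑ a, ∑ b, (∑ i, ∑ j, A i j * L i a * L j b) * (if a = b then (1:ℝ) else 0))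
        * (∑ c, ∑ d, (∑ k, ∑ l, B k l * M k c * M l d) * (if c = d then (1:ℝ) else 0)) := by
    rw [mul_expand]
    refine Finset.sum_congr rfl fun a _ => Finset.sum_congr rfl fun b _ =>
      Finset.sum_congr rfl fun c _ => Finset.sum_congr rfl fun d _ => by ring
  rw [hS1]
  have hT1 : (∑ a, ∑ b, ∑ c, ∑ d,
        ((∑ i, ∑ j, A i j * L i a * L j b) * (∑ k, ∑ l, B k l * M k c * M l d))
          * ((if a = c then (1:ℝ) else 0) * (if b = d then 1 else 0)))
      = ∑ a, ∑ b, (∑ i, ∑ j, A i j * L i a * L j b) * (∑ k, ∑ l, B k l * M k a * M l b) := by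
    refine Finset.sum_congr rfl fun a _ => Finset.sum_congr rfl fun b _ => ?_
    rw [show (∑ c, ∑ d, ((∑ i, ∑ j, A i j * L i a * L j b)
          * (∑ k, ∑ l, B k l * M k c * M l d))
          * ((if a = c then (1:ℝ) else 0) * (if b = d then 1 else 0)))
        = ∑ c, ∑ d, (if a = c then (1:ℝ) else 0) * ((if b = d then (1:ℝ) else 0)
            * ((∑ i, ∑ j, A i j * L i a * L j b) * (∑ k, ∑ l, B k l * M k c * M l d)))
      from Finset.sum_congr rfl fun c _ => Finset.sum_congr rfl fun d _ => by ring]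
    rw [contractδ (fun c d => (∑ i, ∑ j, A i j * L i a * L j b)
      * (∑ k, ∑ l, B k l * M k c * M l d)) a b]
  have hT2 : (∑ a, ∑ b, ∑ c, ∑ d,
        ((∑ i, ∑ j, A i j * L i a * L j b) * (∑ k, ∑ l, B k l * M k c * M l d))
          * ((if a = d then (1:ℝ) else 0) * (if b = c then 1 else 0)))
      = ∑ a, ∑ b, (∑ i, ∑ j, A i j * L i a * L j b) * (∑ k, ∑ l, B k l * M k b * M l a) := by
    refine Finset.sum_congr rfl fun a _ => Finset.sum_congr rfl fun b _ => ?_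
    rw [show (∑ c, ∑ d, ((∑ i, ∑ j, A i j * L i a * L j b)
          * (∑ k, ∑ l, B k l * M k c * M l d))
          * ((if a = d then (1:ℝ) else 0) * (if b = c then 1 else 0)))
        = ∑ c, ∑ d, (if b = c then (1:ℝ) else 0) * ((if a = d then (1:ℝ) else 0)
            * ((∑ i, ∑ j, A i j * L i a * L j b) * (∑ k, ∑ l, B k l * M k c * M l d)))
      from Finset.sum_congr rfl fun c _ => Finset.sum_congr rfl fun d _ => by ring]
    rw [contractδ (fun c d => (∑ i, ∑ j, A i j * L i a * L j b)
      * (∑ k, ∑ l, B k l * M k c * M l d)) b a]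
  rw [hT1, hT2]
  -- cancel means and prove the contracted identity
  have hU1 : (∑ a, ∑ b, (∑ i, ∑ j, A i j * L i a * L j b)
        * (∑ k, ∑ l, B k l * M k a * M l b))
      = ∑ i, ∑ j, ∑ k, ∑ l, A i j * B k l * ((L * Mᵀ) i k * (L * Mᵀ) j l) := by
    have step : ∀ (a b : Fin n), (∑ i, ∑ j, A i j * L i a * L j b)
          * (∑ k, ∑ l, B k l * M k a * M l b)
        = ∑ i, ∑ j, ∑ k, ∑ l, A i j * L i a * L j b * (B k l * M k a * M l b) := by
      intro a b
      exact mul_expand (fun i j => A i j * L i a * L j b) (fun k l => B k l * M k a * M l b)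
    simp only [step]
    rw [swap24]
    refine Finset.sum_congr rfl fun i _ => Finset.sum_congr rfl fun j _ =>
      Finset.sum_congr rfl fun k _ => Finset.sum_congr rfl fun l _ => ?_
    rw [Matrix.mul_apply, Matrix.mul_apply]
    simp only [Matrix.transpose_apply]
    rw [Finset.sum_mul_sum]
    simp only [Finset.mul_sum]
    refine Finset.sum_congr rfl fun a _ => Finset.sum_congr rfl fun b _ => by ring
  have hU2 : (∑ a, ∑ b, (∑ i, ∑ j, A i j * L i a * L j b)
        * (∑ k, ∑ l, B k l * M k b * M l a))
      = ∑ i, ∑ j, ∑ k, ∑ l, A i j * B k l * ((L * Mᵀ) i l * (L * Mᵀ) j k) := by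
    have step : ∀ (a b : Fin n), (∑ i, ∑ j, A i j * L i a * L j b)
          * (∑ k, ∑ l, B k l * M k b * M l a)
        = ∑ i, ∑ j, ∑ k, ∑ l, A i j * L i a * L j b * (B k l * M k b * M l a) := by
      intro a b
      exact mul_expand (fun i j => A i j * L i a * L j b) (fun k l => B k l * M k b * M l a)
    simp only [step]
    rw [swap24]
    refine Finset.sum_congr rfl fun i _ => Finset.sum_congr rfl fun j _ =>
      Finset.sum_congr rfl fun k _ => Finset.sum_congr rfl fun l _ => ?_
    rw [Matrix.mul_apply, Matrix.mul_apply]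
    simp only [Matrix.transpose_apply]
    rw [Finset.sum_mul_sum]
    simp only [Finset.mul_sum]
    refine Finset.sum_congr rfl fun a _ => Finset.sum_congr rfl fun b _ => by ring
  rw [hU1, hU2]
  ring
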